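/- arXiv:2202.06572 — 3 statements merged into one kernel-verified Lean document; each statement's English description precedes it below -/
import Mathlib

section
/- Solution of the first homological equation. Let n ≥ 1, N ≥ 1, and let ω ∈ ℝⁿ satisfy the non-resonance condition k·ω ≠ 0 for all k ∈ ℤⁿ with 0 < |k| ≤ N. Let f(q) = Σ_{k∈ℤⁿ, |k|≤N} c_k exp(i k·q) be a trigonometric polynomial with c_{−k} = conj(c_k). Then the function χ(q) = Σ_{0<|k|≤N} c_k exp(i k·q) / (i k·ω) is real-valued and solves the homological equation {ω·p, χ} + f = c₀, i.e., Σ_{j=1}^n ωⱼ ∂χ/∂qⱼ (q) = f(q) − c₀ for all q ∈ ℝⁿ, where c₀ = ⟨f⟩_q is the angular average of f. -/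
open Complex Finset

section aux
variable {n : ℕ}

noncomputable def Mk (k : Fin n → ℤ) : (Fin n → ℝ) →L[ℝ] ℝ :=
  ∑ i, (k i : ℝ) • ContinuousLinearMap.proj i

lemma Mk_apply (k : Fin n → ℤ) (q : Fin n → ℝ) : Mk k q = ∑ i, (k i : ℝ) * q i := by
  simp [Mk, ContinuousLinearMap.sum_apply]

lemma Mk_single (k : Fin n → ℤ) (j : Fin n) : Mk k (Pi.single j 1) = (k j : ℝ) := by
  rw [Mk_apply]
  simp [Pi.single_apply, mul_ite]

lemma hasFDerivAt_E (k : Fin n → ℤ) (q : Fin n → ℝ) :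
    HasFDerivAt (fun q : Fin n → ℝ => Complex.exp (Complex.I * ∑ i, (k i : ℂ) * (q i)))
      ((Complex.exp (Complex.I * ∑ i, (k i : ℂ) * (q i)) * Complex.I) •
        (Complex.ofRealCLM.comp (Mk k))) q := by
  have harg : ∀ q : Fin n → ℝ,
      (Complex.I * ∑ i, (k i : ℂ) * (q i)) =
        Complex.I * ((Complex.ofRealCLM.comp (Mk k)) q) := by
    intro q
    congr 1
    simp only [ContinuousLinearMap.comp_apply, ofRealCLM_apply, Mk_apply]
    push_cast
    rfl
  have h1 := (((Complex.ofRealCLM.comp (Mk k)).hasFDerivAt (x := q)).const_mul Complex.I).cexp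
  rw [smul_smul] at h1
  simp only [harg]
  exact h1
end aux

/-- Solution of the first homological equation.  Under the
non-resonance condition `k·ω ≠ 0` for `0 < |k| ≤ N`, given a trigonometric
polynomial `f(q) = Σ_{|k|≤N} c_k e^{i k·q}` with `c_{−k} = conj c_k`, the
function `χ(q) = Σ_{0<|k|≤N} c_k e^{i k·q}/(i k·ω)` is real-valued and solves
`Σⱼ ωⱼ ∂χ/∂qⱼ = f − c₀`, i.e. the homological equation `{ω·p, χ} + f = c₀`,
where `c₀ = ⟨f⟩_q`. -/
theorem first_homological_equation (n N : ℕ) (hn : 1 ≤ n) (hN : 1 ≤ N)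
    (ω : Fin n → ℝ)
    (hres : ∀ k : Fin n → ℤ, k ≠ 0 → (∑ i, |k i|) ≤ (N : ℤ) →
      (∑ i, (k i : ℝ) * ω i) ≠ 0)
    (c : (Fin n → ℤ) → ℂ)
    (hsupp : ∀ k, c k ≠ 0 → (∑ i, |k i|) ≤ (N : ℤ))
    (hreal : ∀ k, c (-k) = starRingEnd ℂ (c k))
    (f χ : (Fin n → ℝ) → ℂ)
    (hf : ∀ q : Fin n → ℝ,
      f q = ∑ᶠ k : Fin n → ℤ,
        c k * Complex.exp (Complex.I * ∑ i, (k i : ℂ) * (q i)))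
    (hχ : ∀ q : Fin n → ℝ,
      χ q = ∑ᶠ k : Fin n → ℤ,
        if k ≠ 0 then
          c k * Complex.exp (Complex.I * ∑ i, (k i : ℂ) * (q i)) /
            (Complex.I * ((∑ i, (k i : ℝ) * ω i : ℝ) : ℂ))
        else 0) :
    (∀ q : Fin n → ℝ, (χ q).im = 0) ∧
    (∀ q : Fin n → ℝ,
      (∑ j, ((ω j : ℂ) * fderiv ℝ χ q (Pi.single j 1))) = f q - c 0) := by
  classical
  set E : (Fin n → ℤ) → (Fin n → ℝ) → ℂ :=
    fun k q => Complex.exp (Complex.I * ∑ i, (k i : ℂ) * (q i)) with hE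
  set r : (Fin n → ℤ) → ℝ := fun k => ∑ i, (k i : ℝ) * ω i with hr
  set S : Finset (Fin n → ℤ) :=
    Fintype.piFinset fun _ : Fin n => Finset.Icc (-(N : ℤ)) (N : ℤ) with hSdef
  have hmem : ∀ k : Fin n → ℤ, (∑ i, |k i|) ≤ (N : ℤ) → k ∈ S := by
    intro k hk
    simp only [hSdef, Fintype.mem_piFinset, Finset.mem_Icc, ← abs_le]
    intro i
    exact le_trans (Finset.single_le_sum (fun i _ => abs_nonneg (k i)) (mem_univ i)) hk
  have h0S : (0 : Fin n → ℤ) ∈ S := by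
    apply hmem; simp
  have hnegS : ∀ k : Fin n → ℤ, k ∈ S ↔ -k ∈ S := by
    intro k
    simp only [hSdef, Fintype.mem_piFinset, Finset.mem_Icc, Pi.neg_apply]
    constructor <;> intro h i <;> rcases h i with ⟨h1, h2⟩ <;> omega
  -- finite-sum representations
  have hfS : ∀ q : Fin n → ℝ, f q = ∑ k ∈ S, c k * E k q := by
    intro q
    rw [hf q]
    apply finsum_eq_finset_sum_of_support_subset
    intro k hk
    simp only [Function.mem_support] at hk
    have hck : c k ≠ 0 := fun h => hk (by simp [h])
    exact hmem k (hsupp k hck)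
  have hχS : ∀ q : Fin n → ℝ,
      χ q = ∑ k ∈ S, (if k ≠ 0 then (c k / (Complex.I * (r k : ℂ))) * E k q else 0) := by
    intro q
    rw [hχ q]
    have hrw : (fun k : Fin n → ℤ =>
        if k ≠ 0 then
          c k * Complex.exp (Complex.I * ∑ i, (k i : ℂ) * (q i)) /
            (Complex.I * ((∑ i, (k i : ℝ) * ω i : ℝ) : ℂ))
        else 0) = fun k =>
        (if k ≠ 0 then (c k / (Complex.I * (r k : ℂ))) * E k q else 0) := by
      funext k
      by_cases hk : k = 0 <;> simp [hk, hE, hr, mul_div_right_comm]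
    rw [hrw]
    apply finsum_eq_finset_sum_of_support_subset
    intro k hk
    simp only [Function.mem_support] at hk
    have hk0 : k ≠ 0 := by intro h; exact hk (by simp [h])
    have hck : c k ≠ 0 := by
      intro h; exact hk (by simp [hk0, h])
    exact hmem k (hsupp k hck)
  -- conj of inner phase sum
  have hconjs : ∀ k : Fin n → ℤ, ∀ q : Fin n → ℝ,
      (starRingEnd ℂ) (∑ i, (k i : ℂ) * (q i)) = ∑ i, (k i : ℂ) * (q i) := by
    intro k q
    rw [map_sum]
    refine Finset.sum_congr rfl fun i _ => ?_
    rw [map_mul, map_intCast, Complex.conj_ofReal]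
  constructor
  · -- realness
    intro q
    rw [← Complex.conj_eq_iff_im, hχS q, map_sum]
    refine Finset.sum_equiv (Equiv.neg (Fin n → ℤ)) (fun k => hnegS k) ?_
    intro k hk
    simp only [Equiv.neg_apply]
    by_cases hk0 : k = 0
    · simp [hk0]
    · have hnk0 : -k ≠ 0 := neg_ne_zero.mpr hk0
      rw [if_pos hk0, if_pos hnk0]
      have hs : (∑ i, ((-k) i : ℂ) * (q i)) = -∑ i, (k i : ℂ) * (q i) := by
        rw [← Finset.sum_neg_distrib]
        refine Finset.sum_congr rfl fun i _ => ?_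
        simp only [Pi.neg_apply]; push_cast; ring
      have hrk : ((r (-k) : ℝ) : ℂ) = -((r k : ℝ) : ℂ) := by
        simp only [hr]
        push_cast
        rw [← Finset.sum_neg_distrib]
        refine Finset.sum_congr rfl fun i _ => ?_
        simp only [Pi.neg_apply]; push_cast; ring
      have hE' : E (-k) q = Complex.exp (-(Complex.I * ∑ i, (k i : ℂ) * (q i))) := by
        rw [hE]
        simp only
        rw [hs]; ring_nf
      have hcE : (starRingEnd ℂ) (E k q) =
          Complex.exp (-(Complex.I * ∑ i, (k i : ℂ) * (q i))) := by
        rw [hE]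
        simp only
        rw [← Complex.exp_conj, map_mul, Complex.conj_I, hconjs]
        ring_nf
      rw [map_mul, map_div₀, ← hreal, map_mul, Complex.conj_I, Complex.conj_ofReal,
        hcE, hE', hrk]
      ring
  · -- homological equation
    intro q
    -- derivative of each summand of χ
    set D : (Fin n → ℤ) → (Fin n → ℝ) →L[ℝ] ℂ := fun k =>
      if k ≠ 0 then
        (c k / (Complex.I * (r k : ℂ))) •
          ((E k q * Complex.I) • (Complex.ofRealCLM.comp (Mk k)))
      else 0 with hD
    have hχd : HasFDerivAt χ (∑ k ∈ S, D k) q := by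
      have hfun : χ = fun q : Fin n → ℝ =>
          ∑ k ∈ S, (if k ≠ 0 then (c k / (Complex.I * (r k : ℂ))) * E k q else 0) :=
        funext hχS
      rw [hfun]
      refine HasFDerivAt.fun_sum fun k _ => ?_
      by_cases hk0 : k = 0
      · simp only [hD, hk0, ne_eq, not_true_eq_false, if_false, ite_not]
        simpa using hasFDerivAt_const (0 : ℂ) q
      · simp only [hD, if_pos hk0, ne_eq, hk0, not_false_eq_true, if_true]
        exact (hasFDerivAt_E k q).const_mul _
    have hfd : fderiv ℝ χ q = ∑ k ∈ S, D k := hχd.fderiv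
    rw [hfd]
    have happ : ∀ j : Fin n, (∑ k ∈ S, D k) (Pi.single j 1) =
        ∑ k ∈ S, (if k ≠ 0 then
          (c k / (Complex.I * (r k : ℂ))) * (E k q * Complex.I * ((k j : ℝ) : ℂ))
          else 0) := by
      intro j
      rw [ContinuousLinearMap.sum_apply]
      refine Finset.sum_congr rfl fun k _ => ?_
      by_cases hk0 : k = 0
      · simp [hD, hk0]
      · simp only [hD, if_pos hk0, ContinuousLinearMap.smul_apply,
          ContinuousLinearMap.comp_apply, ofRealCLM_apply, Mk_single, smul_eq_mul]
    calc ∑ j, ((ω j : ℂ) * (∑ k ∈ S, D k) (Pi.single j 1))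
        = ∑ j, ∑ k ∈ S, (ω j : ℂ) * (if k ≠ 0 then
            (c k / (Complex.I * (r k : ℂ))) * (E k q * Complex.I * ((k j : ℝ) : ℂ))
            else 0) := by
          refine Finset.sum_congr rfl fun j _ => ?_
          rw [happ j, Finset.mul_sum]
      _ = ∑ k ∈ S, ∑ j, (ω j : ℂ) * (if k ≠ 0 then
            (c k / (Complex.I * (r k : ℂ))) * (E k q * Complex.I * ((k j : ℝ) : ℂ))
            else 0) := Finset.sum_comm
      _ = ∑ k ∈ S, (if k ≠ 0 then c k * E k q else 0) := by
          refine Finset.sum_congr rfl fun k hk => ?_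
          by_cases hk0 : k = 0
          · simp [hk0]
          · simp only [if_pos hk0, ne_eq, hk0, not_false_eq_true, if_true]
            by_cases hc : c k = 0
            · simp [hc]
            · have hrk0 : r k ≠ 0 := hres k hk0 (hsupp k hc)
              have hrkC : ((r k : ℝ) : ℂ) = ∑ j, (ω j : ℂ) * ((k j : ℝ) : ℂ) := by
                rw [hr]
                push_cast
                refine Finset.sum_congr rfl fun j _ => ?_
                ring
              have hstep : ∑ j, (ω j : ℂ) * ((c k / (Complex.I * ((r k : ℝ) : ℂ))) *
                  (E k q * Complex.I * ((k j : ℝ) : ℂ))) =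
                  (c k / (Complex.I * ((r k : ℝ) : ℂ))) * (E k q * Complex.I) *
                    (∑ j, (ω j : ℂ) * ((k j : ℝ) : ℂ)) := by
                rw [Finset.mul_sum]
                refine Finset.sum_congr rfl fun j _ => ?_
                ring
              rw [hstep, ← hrkC]
              have hI : Complex.I ≠ 0 := Complex.I_ne_zero
              have hrC : ((r k : ℝ) : ℂ) ≠ 0 := Complex.ofReal_ne_zero.mpr hrk0
              field_simp
      _ = f q - c 0 := by
          rw [hfS q]
          have hE0 : E 0 q = 1 := by
            rw [hE]; simp
          rw [← Finset.add_sum_erase S (fun k => c k * E k q) h0S,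
            ← Finset.add_sum_erase S
              (fun k => if k ≠ 0 then c k * E k q else 0) h0S]
          have h1 : ∑ k ∈ S.erase 0, (if k ≠ 0 then c k * E k q else 0) =
              ∑ k ∈ S.erase 0, c k * E k q := by
            refine Finset.sum_congr rfl fun k hk => ?_
            rw [if_pos (Finset.ne_of_mem_erase hk)]
          rw [if_neg (fun h => h rfl), h1, hE0, mul_one, zero_add]
          ring
end

section
/- Solution of the second homological equation. Let n ≥ 1, N ≥ 1, and let ω ∈ ℝⁿ satisfy the non-resonance condition k·ω ≠ 0 for all k ∈ ℤⁿ with 0 < |k| ≤ N. Let f(p,q) = Σ_{j∈ℕⁿ,|j|=1} Σ_{0<|k|≤N} c_{j,k} p^j exp(i k·q) be a function linear in the actions with zero angular average and c_{j,−k} = conj(c_{j,k}). Then the function χ(p,q) = Σ_{|j|=1} Σ_{0<|k|≤N} c_{j,k} p^j exp(i k·q)/(i k·ω) is real-valued and solves the homological equation {ω·p, χ} + f = 0, where the Poisson bracket is {f,g} = Σ_{j=1}^n (∂f/∂qⱼ ∂g/∂pⱼ − ∂f/∂pⱼ ∂g/∂qⱼ). -/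
open Complex Finset

/-- The Poisson bracket `{f,g} = Σⱼ (∂f/∂qⱼ ∂g/∂pⱼ − ∂f/∂pⱼ ∂g/∂qⱼ)` for
complex-valued functions of the canonical coordinates `(p,q) ∈ ℝⁿ × ℝⁿ`. -/
noncomputable def poissonBracketC (n : ℕ) (f g : (Fin n → ℝ) × (Fin n → ℝ) → ℂ)
    (x : (Fin n → ℝ) × (Fin n → ℝ)) : ℂ :=
  ∑ j, (fderiv ℝ f x (0, Pi.single j 1) * fderiv ℝ g x (Pi.single j 1, 0)
      - fderiv ℝ f x (Pi.single j 1, 0) * fderiv ℝ g x (0, Pi.single j 1))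

namespace SecondHomological

variable {n : ℕ}

/-- linear map `x ↦ x.1 j`. -/
noncomputable def PL (n : ℕ) (j : Fin n) : ((Fin n → ℝ) × (Fin n → ℝ)) →L[ℝ] ℝ :=
  (ContinuousLinearMap.proj j).comp (ContinuousLinearMap.fst ℝ (Fin n → ℝ) (Fin n → ℝ))

/-- linear map `x ↦ ∑ i, k i * x.2 i`. -/
noncomputable def QL (n : ℕ) (k : Fin n → ℤ) : ((Fin n → ℝ) × (Fin n → ℝ)) →L[ℝ] ℝ :=
  ∑ i, (k i : ℝ) • ((ContinuousLinearMap.proj i).comp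
    (ContinuousLinearMap.snd ℝ (Fin n → ℝ) (Fin n → ℝ)))

lemma PL_apply (j : Fin n) (x : (Fin n → ℝ) × (Fin n → ℝ)) : PL n j x = x.1 j := rfl

lemma QL_apply (k : Fin n → ℤ) (x : (Fin n → ℝ) × (Fin n → ℝ)) :
    QL n k x = ∑ i, (k i : ℝ) * x.2 i := by
  simp [QL, ContinuousLinearMap.sum_apply]

/-- the basic exponential-monomial term. -/
noncomputable def T (n : ℕ) (a : ℂ) (j : Fin n) (k : Fin n → ℤ) :
    (Fin n → ℝ) × (Fin n → ℝ) → ℂ :=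
  fun x => a * (x.1 j : ℂ) * Complex.exp (Complex.I * ∑ i, (k i : ℂ) * x.2 i)

/-- its derivative. -/
noncomputable def DT (n : ℕ) (a : ℂ) (j : Fin n) (k : Fin n → ℤ)
    (x : (Fin n → ℝ) × (Fin n → ℝ)) : ((Fin n → ℝ) × (Fin n → ℝ)) →L[ℝ] ℂ :=
  (a * Complex.exp (Complex.I * ∑ i, (k i : ℂ) * x.2 i)) • (Complex.ofRealCLM.comp (PL n j))
    + (T n a j k x * Complex.I) • (Complex.ofRealCLM.comp (QL n k))

lemma cast_QL (k : Fin n → ℤ) (x : (Fin n → ℝ) × (Fin n → ℝ)) :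
    ((QL n k x : ℝ) : ℂ) = ∑ i, (k i : ℂ) * x.2 i := by
  rw [QL_apply]; push_cast; ring

lemma hasFDerivAt_T (a : ℂ) (j : Fin n) (k : Fin n → ℤ) (x : (Fin n → ℝ) × (Fin n → ℝ)) :
    HasFDerivAt (T n a j k) (DT n a j k x) x := by
  have hu : HasFDerivAt (fun y : (Fin n → ℝ) × (Fin n → ℝ) => ((y.1 j : ℝ) : ℂ))
      (Complex.ofRealCLM.comp (PL n j)) x :=
    (Complex.ofRealCLM.comp (PL n j)).hasFDerivAt
  have hw : HasFDerivAt (fun y : (Fin n → ℝ) × (Fin n → ℝ) => Complex.I * ((QL n k y : ℝ) : ℂ))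
      (Complex.I • (Complex.ofRealCLM.comp (QL n k))) x :=
    ((Complex.ofRealCLM.comp (QL n k)).hasFDerivAt).const_mul Complex.I
  have hv := hw.cexp
  have huv := (hu.mul hv).const_mul a
  have hfun : T n a j k = fun y : (Fin n → ℝ) × (Fin n → ℝ) =>
      a * (((y.1 j : ℝ) : ℂ) * Complex.exp (Complex.I * ((QL n k y : ℝ) : ℂ))) := by
    funext y
    simp [T, cast_QL, mul_assoc]
  have hder : DT n a j k x
      = a • (((x.1 j : ℝ) : ℂ) • (Complex.exp (Complex.I * ((QL n k x : ℝ) : ℂ))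
            • (Complex.I • (Complex.ofRealCLM.comp (QL n k))))
          + Complex.exp (Complex.I * ((QL n k x : ℝ) : ℂ))
            • (Complex.ofRealCLM.comp (PL n j))) := by
    refine ContinuousLinearMap.ext fun w => ?_
    simp only [DT, T, ContinuousLinearMap.add_apply, ContinuousLinearMap.smul_apply,
      ContinuousLinearMap.coe_comp', Function.comp_apply, smul_eq_mul, cast_QL]
    ring
  rw [hfun, hder]
  exact huv

lemma DT_qdir (a : ℂ) (j : Fin n) (k : Fin n → ℤ) (x : (Fin n → ℝ) × (Fin n → ℝ)) (m : Fin n) :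
    DT n a j k x (0, Pi.single m 1) = T n a j k x * Complex.I * (k m : ℂ) := by
  have h1 : PL n j ((0, Pi.single m 1) : (Fin n → ℝ) × (Fin n → ℝ)) = 0 := rfl
  have h2 : QL n k ((0, Pi.single m 1) : (Fin n → ℝ) × (Fin n → ℝ)) = (k m : ℝ) := by
    rw [QL_apply]
    simp [Pi.single_apply, mul_ite]
  simp only [DT, ContinuousLinearMap.add_apply, ContinuousLinearMap.smul_apply,
    ContinuousLinearMap.coe_comp', Function.comp_apply, h1, h2, smul_eq_mul]
  simp [mul_assoc]

lemma DT_pdir (a : ℂ) (j : Fin n) (k : Fin n → ℤ) (x : (Fin n → ℝ) × (Fin n → ℝ)) (m : Fin n) :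
    DT n a j k x (Pi.single m 1, 0)
      = (a * Complex.exp (Complex.I * ∑ i, (k i : ℂ) * x.2 i)) * ((Pi.single m 1 : Fin n → ℝ) j : ℂ) := by
  have h1 : PL n j ((Pi.single m 1, 0) : (Fin n → ℝ) × (Fin n → ℝ)) = (Pi.single m 1 : Fin n → ℝ) j := rfl
  have h2 : QL n k ((Pi.single m 1, 0) : (Fin n → ℝ) × (Fin n → ℝ)) = 0 := by
    rw [QL_apply]; simp
  simp only [DT, ContinuousLinearMap.add_apply, ContinuousLinearMap.smul_apply,
    ContinuousLinearMap.coe_comp', Function.comp_apply, h1, h2, smul_eq_mul]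
  simp

end SecondHomological

open SecondHomological in
/-- Solution of the second homological equation.  Under the
non-resonance condition `k·ω ≠ 0` for `0 < |k| ≤ N`, given
`f(p,q) = Σ_{|j|=1} Σ_{0<|k|≤N} c_{j,k} p^j e^{i k·q}` (linear in the actions,
zero angular average, `c_{j,−k} = conj c_{j,k}`), the function
`χ(p,q) = Σ_{|j|=1} Σ_{0<|k|≤N} c_{j,k} p^j e^{i k·q}/(i k·ω)` is real-valued
and solves `{ω·p, χ} + f = 0`. -/
theorem second_homological_equation (n N : ℕ) (hn : 1 ≤ n) (hN : 1 ≤ N)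
    (ω : Fin n → ℝ)
    (hres : ∀ k : Fin n → ℤ, k ≠ 0 → (∑ i, |k i|) ≤ (N : ℤ) →
      (∑ i, (k i : ℝ) * ω i) ≠ 0)
    (c : Fin n → (Fin n → ℤ) → ℂ)
    (hsupp : ∀ j k, c j k ≠ 0 → k ≠ 0 ∧ (∑ i, |k i|) ≤ (N : ℤ))
    (hreal : ∀ j k, c j (-k) = starRingEnd ℂ (c j k))
    (f χ : (Fin n → ℝ) × (Fin n → ℝ) → ℂ)
    (hf : ∀ x : (Fin n → ℝ) × (Fin n → ℝ),
      f x = ∑ j, ∑ᶠ k : Fin n → ℤ,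
        c j k * (x.1 j : ℂ) * Complex.exp (Complex.I * ∑ i, (k i : ℂ) * (x.2 i)))
    (hχ : ∀ x : (Fin n → ℝ) × (Fin n → ℝ),
      χ x = ∑ j, ∑ᶠ k : Fin n → ℤ,
        if k ≠ 0 then
          c j k * (x.1 j : ℂ) * Complex.exp (Complex.I * ∑ i, (k i : ℂ) * (x.2 i)) /
            (Complex.I * ((∑ i, (k i : ℝ) * ω i : ℝ) : ℂ))
        else 0) :
    (∀ x : (Fin n → ℝ) × (Fin n → ℝ), (χ x).im = 0) ∧
    (∀ x : (Fin n → ℝ) × (Fin n → ℝ),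
      poissonBracketC n (fun y => ∑ i, (ω i : ℂ) * (y.1 i : ℂ)) χ x + f x = 0) := by
  classical
  -- the finite Fourier support set
  set K : Finset (Fin n → ℤ) := Fintype.piFinset (fun _ => Finset.Icc (-(N : ℤ)) (N : ℤ)) with hK
  have hmemK : ∀ k : Fin n → ℤ, (∑ i, |k i|) ≤ (N : ℤ) → k ∈ K := by
    intro k hk
    rw [hK, Fintype.mem_piFinset]
    intro i
    rw [Finset.mem_Icc, ← abs_le]
    exact le_trans (Finset.single_le_sum (f := fun i => |k i|) (fun i _ => abs_nonneg _)
      (Finset.mem_univ i)) hk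
  -- the denominator coefficient
  set d : (Fin n → ℤ) → ℂ := fun k =>
    if k ≠ 0 then (Complex.I * ((∑ i, (k i : ℝ) * ω i : ℝ) : ℂ))⁻¹ else 0 with hd
  -- rewrite f as a finite sum
  have hfK : ∀ x, f x = ∑ j, ∑ k ∈ K, T n (c j k) j k x := by
    intro x
    rw [hf x]
    refine Finset.sum_congr rfl fun j _ => ?_
    refine finsum_eq_finset_sum_of_support_subset _ fun k hk => ?_
    have hc : c j k ≠ 0 := by
      intro h
      apply hk
      simp [h]
    exact hmemK k (hsupp j k hc).2
  -- rewrite χ as a finite sum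
  have hχK : ∀ x, χ x = ∑ j, ∑ k ∈ K, T n (c j k) j k x * d k := by
    intro x
    rw [hχ x]
    refine Finset.sum_congr rfl fun j _ => ?_
    have heq : ∀ k : Fin n → ℤ,
        (if k ≠ 0 then
          c j k * (x.1 j : ℂ) * Complex.exp (Complex.I * ∑ i, (k i : ℂ) * (x.2 i)) /
            (Complex.I * ((∑ i, (k i : ℝ) * ω i : ℝ) : ℂ))
        else 0) = T n (c j k) j k x * d k := by
      intro k
      by_cases hk : k = 0
      · simp [hk, hd]
      · simp only [hd, hk, if_pos, ne_eq, not_false_iff, if_true]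
        rw [div_eq_mul_inv]
        rfl
    rw [finsum_congr heq]
    refine finsum_eq_finset_sum_of_support_subset _ fun k hk => ?_
    have hc : c j k ≠ 0 := by
      intro h
      apply hk
      simp [T, h]
    exact hmemK k (hsupp j k hc).2
  constructor
  · -- reality
    intro x
    rw [hχK x, Complex.im_sum]
    refine Finset.sum_eq_zero fun j _ => ?_
    rw [Complex.im_sum]
    refine Finset.sum_involution (fun k _ => -k) ?_ ?_ ?_ (fun k hk => neg_neg k)
    · intro k hkK
      by_cases hk : k = 0
      · simp [hk, hd]
      · have hconj : T n (c j (-k)) j (-k) x * d (-k) = (starRingEnd ℂ) (T n (c j k) j k x * d k) := by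
          have hS : (Complex.I * ∑ i, ((-k) i : ℂ) * x.2 i) = -(Complex.I * ∑ i, (k i : ℂ) * x.2 i) := by
            have : (∑ i, ((-k) i : ℂ) * x.2 i) = -∑ i, (k i : ℂ) * x.2 i := by
              simp [Pi.neg_apply, neg_mul, Finset.sum_neg_distrib]
            rw [this]; ring
          have hr : (∑ i, ((-k) i : ℝ) * ω i) = -(∑ i, (k i : ℝ) * ω i) := by
            simp [Pi.neg_apply, neg_mul, Finset.sum_neg_distrib]
          have hknz : (-k : Fin n → ℤ) ≠ 0 := fun h => hk (by simpa using congrArg Neg.neg h)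
          simp only [T, hd, hknz, hk, ne_eq, not_false_iff, if_true, hreal j k, hS, hr]
          rw [map_mul, map_mul, map_mul, map_inv₀, map_mul]
          have hSc : (starRingEnd ℂ) (Complex.I * ∑ i, (k i : ℂ) * x.2 i)
              = -(Complex.I * ∑ i, (k i : ℂ) * x.2 i) := by
            rw [map_mul, Complex.conj_I, map_sum]
            simp only [map_mul, map_intCast, Complex.conj_ofReal]
            ring
          simp only [← Complex.exp_conj, Complex.conj_ofReal, Complex.conj_I]
          rw [hSc]
          simp only [Complex.ofReal_neg, inv_neg]
          ring
        rw [hconj, Complex.conj_im]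
        ring
    · intro k hkK hknz h
      apply hknz
      have hk0 : k = 0 := by
        funext i
        have h2 := congrFun h i
        simp only [Pi.neg_apply] at h2
        simp only [Pi.zero_apply]
        omega
      simp [hk0, hd]
    · intro k hkK
      show -k ∈ K
      rw [hK, Fintype.mem_piFinset] at hkK ⊢
      intro i
      have := hkK i
      simp only [Finset.mem_Icc, Pi.neg_apply] at this ⊢
      omega
  · -- homological equation
    intro x
    set GH : ((Fin n → ℝ) × (Fin n → ℝ)) →L[ℝ] ℂ :=
      ∑ i, (ω i : ℂ) • (Complex.ofRealCLM.comp (PL n i)) with hGH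
    have hH : HasFDerivAt (fun y : (Fin n → ℝ) × (Fin n → ℝ) =>
        ∑ i, (ω i : ℂ) * (y.1 i : ℂ)) GH x :=
      HasFDerivAt.fun_sum fun i _ =>
        ((Complex.ofRealCLM.comp (PL n i)).hasFDerivAt (x := x)).const_mul ((ω i : ℂ))
    have hHfd : fderiv ℝ (fun y : (Fin n → ℝ) × (Fin n → ℝ) =>
        ∑ i, (ω i : ℂ) * (y.1 i : ℂ)) x = GH := hH.fderiv
    set Dχ : ((Fin n → ℝ) × (Fin n → ℝ)) →L[ℝ] ℂ :=
      ∑ j, ∑ k ∈ K, d k • DT n (c j k) j k x with hDχ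
    have hχd : HasFDerivAt χ Dχ x := by
      have h1 : HasFDerivAt (fun y => ∑ j, ∑ k ∈ K, T n (c j k) j k y * d k) Dχ x :=
        HasFDerivAt.fun_sum fun j _ =>
          HasFDerivAt.fun_sum fun k _ => (hasFDerivAt_T (c j k) j k x).mul_const (d k)
      rw [funext hχK]
      exact h1
    have hχfd : fderiv ℝ χ x = Dχ := hχd.fderiv
    have hGq : ∀ m, GH ((0, Pi.single m 1) : (Fin n → ℝ) × (Fin n → ℝ)) = 0 := by
      intro m
      simp [hGH, ContinuousLinearMap.sum_apply, PL]
    have hGp : ∀ m, GH ((Pi.single m 1, 0) : (Fin n → ℝ) × (Fin n → ℝ)) = (ω m : ℂ) := by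
      intro m
      simp [hGH, ContinuousLinearMap.sum_apply, PL, Pi.single_apply, mul_ite,
        apply_ite (Complex.ofReal), Finset.sum_ite_eq']
    have hDq : ∀ m, Dχ ((0, Pi.single m 1) : (Fin n → ℝ) × (Fin n → ℝ))
        = ∑ j, ∑ k ∈ K, d k * (T n (c j k) j k x * Complex.I * (k m : ℂ)) := by
      intro m
      simp only [hDχ, ContinuousLinearMap.sum_apply, ContinuousLinearMap.smul_apply,
        smul_eq_mul, DT_qdir]
    have hswap : ∑ m, (ω m : ℂ) * ∑ j, ∑ k ∈ K, d k * (T n (c j k) j k x * Complex.I * (k m : ℂ))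
        = ∑ j, ∑ k ∈ K, d k * (T n (c j k) j k x * Complex.I * ((∑ i, (k i : ℝ) * ω i : ℝ) : ℂ)) := by
      simp only [Finset.mul_sum]
      rw [Finset.sum_comm]
      refine Finset.sum_congr rfl fun j _ => ?_
      rw [Finset.sum_comm]
      refine Finset.sum_congr rfl fun k _ => ?_
      rw [Complex.ofReal_sum, Finset.mul_sum, Finset.mul_sum]
      refine Finset.sum_congr rfl fun m _ => ?_
      push_cast
      ring
    have hcancel : ∀ j : Fin n, ∀ k ∈ K,
        d k * (T n (c j k) j k x * Complex.I * ((∑ i, (k i : ℝ) * ω i : ℝ) : ℂ))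
          = T n (c j k) j k x := by
      intro j k _
      by_cases hc : c j k = 0
      · simp [T, hc]
      · obtain ⟨hk0, hkN⟩ := hsupp j k hc
        have hr : ((∑ i, (k i : ℝ) * ω i : ℝ) : ℂ) ≠ 0 :=
          Complex.ofReal_ne_zero.2 (hres k hk0 hkN)
        simp only [hd, hk0, ne_eq, not_false_iff, if_true]
        push_cast at hr ⊢
        field_simp [Complex.I_ne_zero, hr]
    have hmain : poissonBracketC n (fun y => ∑ i, (ω i : ℂ) * (y.1 i : ℂ)) χ x
        = -∑ j, ∑ k ∈ K, T n (c j k) j k x := by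
      unfold poissonBracketC
      rw [hHfd, hχfd]
      calc ∑ m, (GH (0, Pi.single m 1) * Dχ (Pi.single m 1, 0)
              - GH (Pi.single m 1, 0) * Dχ (0, Pi.single m 1))
          = -∑ m, (ω m : ℂ) * Dχ ((0, Pi.single m 1) : (Fin n → ℝ) × (Fin n → ℝ)) := by
            rw [← Finset.sum_neg_distrib]
            exact Finset.sum_congr rfl fun m _ => by rw [hGq, hGp]; ring
        _ = -∑ j, ∑ k ∈ K, d k * (T n (c j k) j k x * Complex.I
              * ((∑ i, (k i : ℝ) * ω i : ℝ) : ℂ)) := by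
            rw [← hswap]
            simp only [hDq]
        _ = -∑ j, ∑ k ∈ K, T n (c j k) j k x := by
            congr 1
            exact Finset.sum_congr rfl fun j _ => Finset.sum_congr rfl (hcancel j)
    rw [hmain, hfK x]
    exact neg_add_cancel _
end

section
/- Solution of the homological equation under the second Melnikov condition. Let n₁, n₂ ≥ 1, N ≥ 1, let ω ∈ ℝ^{n₁} and Ω ∈ ℝ^{n₂} satisfy k·ω + σΩᵢ + σ'Ωⱼ ≠ 0 for all k ∈ ℤ^{n₁} with 0 < |k| ≤ N, all σ, σ' ∈ {+1,−1} and all 1 ≤ i, j ≤ n₂. Let f(q,J,φ) = Σ_{|k|≤N} Σ_{i,j=1}^{n₂} Σ_{σ,σ'∈{±1}} c^{(σ,σ')}_{k,i,j} √(Jᵢ Jⱼ) exp(i(k·q + σφᵢ + σ'φⱼ)) with the reality condition c^{(σ,σ')}_{k,i,j} = conj(c^{(−σ,−σ')}_{−k,i,j}). Then the function Y(q,J,φ) = Σ_{0<|k|≤N} Σ_{i,j=1}^{n₂} Σ_{σ,σ'∈{±1}} c^{(σ,σ')}_{k,i,j} √(Jᵢ Jⱼ) exp(i(k·q + σφᵢ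 + σ'φⱼ)) / (i(k·ω + σΩᵢ + σ'Ωⱼ)) is real-valued and, on the domain where all Jⱼ > 0, solves the homological equation {ω·p + Ω·J, Y} + f − ⟨f⟩_q = 0, where ⟨f⟩_q is the average of f over the angles q (the k = 0 part of the Fourier expansion). -/
/-- Phase space with `n₁` action-angle pairs `(p,q)` and `n₂` action-angle
pairs `(J,φ)`. -/
abbrev PhaseSp (n₁ n₂ : ℕ) :=
  (Fin n₁ → ℝ) × (Fin n₁ → ℝ) × (Fin n₂ → ℝ) × (Fin n₂ → ℝ)

/-- The Poisson bracket `{f,g}` for complex-valued functions on `(p,q,J,φ)`. -/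
noncomputable def poissonBracketEll (n₁ n₂ : ℕ) (f g : PhaseSp n₁ n₂ → ℂ)
    (x : PhaseSp n₁ n₂) : ℂ :=
  (∑ j : Fin n₁,
    (fderiv ℝ f x (0, Pi.single j 1, 0, 0) * fderiv ℝ g x (Pi.single j 1, 0, 0, 0)
     - fderiv ℝ f x (Pi.single j 1, 0, 0, 0) * fderiv ℝ g x (0, Pi.single j 1, 0, 0)))
  + ∑ j : Fin n₂,
    (fderiv ℝ f x (0, 0, 0, Pi.single j 1) * fderiv ℝ g x (0, 0, Pi.single j 1, 0)
     - fderiv ℝ f x (0, 0, Pi.single j 1, 0) * fderiv ℝ g x (0, 0, 0, Pi.single j 1))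

/-- The sign `+1` or `−1` encoded by a boolean. -/
def sg (b : Bool) : ℝ := if b then 1 else -1

namespace SMHE

variable {n₁ n₂ : ℕ}

noncomputable def Pc (a : Fin n₁) : PhaseSp n₁ n₂ →L[ℝ] ℝ :=
  (ContinuousLinearMap.proj a).comp
    (ContinuousLinearMap.fst ℝ (Fin n₁ → ℝ) ((Fin n₁ → ℝ) × (Fin n₂ → ℝ) × (Fin n₂ → ℝ)))

noncomputable def Qc (a : Fin n₁) : PhaseSp n₁ n₂ →L[ℝ] ℝ :=
  (ContinuousLinearMap.proj a).comp
    ((ContinuousLinearMap.fst ℝ (Fin n₁ → ℝ) ((Fin n₂ → ℝ) × (Fin n₂ → ℝ))).comp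
      (ContinuousLinearMap.snd ℝ (Fin n₁ → ℝ) ((Fin n₁ → ℝ) × (Fin n₂ → ℝ) × (Fin n₂ → ℝ))))

noncomputable def Jc (a : Fin n₂) : PhaseSp n₁ n₂ →L[ℝ] ℝ :=
  (ContinuousLinearMap.proj a).comp
    ((ContinuousLinearMap.fst ℝ (Fin n₂ → ℝ) (Fin n₂ → ℝ)).comp
      ((ContinuousLinearMap.snd ℝ (Fin n₁ → ℝ) ((Fin n₂ → ℝ) × (Fin n₂ → ℝ))).comp
        (ContinuousLinearMap.snd ℝ (Fin n₁ → ℝ) ((Fin n₁ → ℝ) × (Fin n₂ → ℝ) × (Fin n₂ → ℝ)))))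

noncomputable def Fc (a : Fin n₂) : PhaseSp n₁ n₂ →L[ℝ] ℝ :=
  (ContinuousLinearMap.proj a).comp
    ((ContinuousLinearMap.snd ℝ (Fin n₂ → ℝ) (Fin n₂ → ℝ)).comp
      ((ContinuousLinearMap.snd ℝ (Fin n₁ → ℝ) ((Fin n₂ → ℝ) × (Fin n₂ → ℝ))).comp
        (ContinuousLinearMap.snd ℝ (Fin n₁ → ℝ) ((Fin n₁ → ℝ) × (Fin n₂ → ℝ) × (Fin n₂ → ℝ)))))

@[simp] lemma Pc_apply (a : Fin n₁) (v : PhaseSp n₁ n₂) : Pc a v = v.1 a := rfl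
@[simp] lemma Qc_apply (a : Fin n₁) (v : PhaseSp n₁ n₂) : Qc a v = v.2.1 a := rfl
@[simp] lemma Jc_apply (a : Fin n₂) (v : PhaseSp n₁ n₂) : Jc a v = v.2.2.1 a := rfl
@[simp] lemma Fc_apply (a : Fin n₂) (v : PhaseSp n₁ n₂) : Fc a v = v.2.2.2 a := rfl

noncomputable def Lθ (k : Fin n₁ → ℤ) (i j : Fin n₂) (σ σ' : Bool) :
    PhaseSp n₁ n₂ →L[ℝ] ℝ :=
  (∑ a, (k a : ℝ) • Qc a) + sg σ • Fc i + sg σ' • Fc j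

lemma Lθ_apply (k : Fin n₁ → ℤ) (i j : Fin n₂) (σ σ' : Bool) (v : PhaseSp n₁ n₂) :
    Lθ k i j σ σ' v = (∑ a, (k a : ℝ) * v.2.1 a) + sg σ * v.2.2.2 i + sg σ' * v.2.2.2 j := by
  simp [Lθ, ContinuousLinearMap.sum_apply]

noncomputable def θR (k : Fin n₁ → ℤ) (i j : Fin n₂) (σ σ' : Bool) (x : PhaseSp n₁ n₂) : ℝ :=
  (∑ a, (k a : ℝ) * x.2.1 a) + sg σ * x.2.2.2 i + sg σ' * x.2.2.2 j

noncomputable def u (k : Fin n₁ → ℤ) (i j : Fin n₂) (σ σ' : Bool) (x : PhaseSp n₁ n₂) : ℂ :=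
  ((Real.sqrt (x.2.2.1 i * x.2.2.1 j) : ℝ) : ℂ) *
    Complex.exp (Complex.I * ((θR k i j σ σ' x : ℝ) : ℂ))

lemma u_eq (k : Fin n₁ → ℤ) (i j : Fin n₂) (σ σ' : Bool) (x : PhaseSp n₁ n₂) :
    u k i j σ σ' x = ((Real.sqrt (x.2.2.1 i * x.2.2.1 j) : ℝ) : ℂ) *
      Complex.exp (Complex.I * ((∑ a, (k a : ℂ) * (x.2.1 a))
        + ((sg σ : ℝ) : ℂ) * (x.2.2.2 i : ℂ) + ((sg σ' : ℝ) : ℂ) * (x.2.2.2 j : ℂ))) := by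
  unfold u θR
  push_cast
  ring_nf

lemma hasFDerivAt_θR (k : Fin n₁ → ℤ) (i j : Fin n₂) (σ σ' : Bool) (x : PhaseSp n₁ n₂) :
    HasFDerivAt (θR k i j σ σ') (Lθ k i j σ σ') x := by
  have h1 : ∀ a : Fin n₁, HasFDerivAt (fun y : PhaseSp n₁ n₂ => (k a : ℝ) * y.2.1 a)
      ((k a : ℝ) • Qc a) x := fun a => ((Qc a).hasFDerivAt (x := x)).const_mul _
  have hs : HasFDerivAt (fun y : PhaseSp n₁ n₂ => ∑ a, (k a : ℝ) * y.2.1 a)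
      (∑ a, (k a : ℝ) • Qc a) x := HasFDerivAt.fun_sum (fun a _ => h1 a)
  have h2 : HasFDerivAt (fun y : PhaseSp n₁ n₂ => sg σ * y.2.2.2 i) (sg σ • Fc i) x :=
    ((Fc i).hasFDerivAt (x := x)).const_mul _
  have h3 : HasFDerivAt (fun y : PhaseSp n₁ n₂ => sg σ' * y.2.2.2 j) (sg σ' • Fc j) x :=
    ((Fc j).hasFDerivAt (x := x)).const_mul _
  exact (hs.add h2).add h3

lemma hasFDerivAt_u (k : Fin n₁ → ℤ) (i j : Fin n₂) (σ σ' : Bool) (x : PhaseSp n₁ n₂)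
    (hx : 0 < x.2.2.1 i * x.2.2.1 j) :
    ∃ D : PhaseSp n₁ n₂ →L[ℝ] ℂ, HasFDerivAt (u k i j σ σ') D x ∧
      ∀ v : PhaseSp n₁ n₂, v.2.2.1 = 0 →
        D v = Complex.I * ((Lθ k i j σ σ' v : ℝ) : ℂ) * u k i j σ σ' x := by
  -- sqrt part
  have hJi : HasFDerivAt (fun y : PhaseSp n₁ n₂ => y.2.2.1 i) (Jc i) x :=
    (Jc i).hasFDerivAt (x := x)
  have hJj : HasFDerivAt (fun y : PhaseSp n₁ n₂ => y.2.2.1 j) (Jc j) x :=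
    (Jc j).hasFDerivAt (x := x)
  have hprod : HasFDerivAt (fun y : PhaseSp n₁ n₂ => y.2.2.1 i * y.2.2.1 j)
      (x.2.2.1 i • Jc j + x.2.2.1 j • Jc i) x := hJi.mul hJj
  have hne : x.2.2.1 i * x.2.2.1 j ≠ 0 := ne_of_gt hx
  have hsqrt' := (Real.hasDerivAt_sqrt hne).comp_hasFDerivAt x hprod
  -- hsqrt' : HasFDerivAt (fun y => Real.sqrt (y.2.2.1 i * y.2.2.1 j))
  --   ((1 / (2 * Real.sqrt _)) • (x.2.2.1 i • Jc j + x.2.2.1 j • Jc i)) x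
  have hsqrtC : HasFDerivAt (fun y : PhaseSp n₁ n₂ =>
      ((Real.sqrt (y.2.2.1 i * y.2.2.1 j) : ℝ) : ℂ))
      (Complex.ofRealCLM.comp ((1 / (2 * Real.sqrt (x.2.2.1 i * x.2.2.1 j))) •
        (x.2.2.1 i • Jc j + x.2.2.1 j • Jc i))) x :=
    Complex.ofRealCLM.hasFDerivAt.comp x hsqrt'
  -- exp part
  have hθ := hasFDerivAt_θR k i j σ σ' x
  have hθC : HasFDerivAt (fun y : PhaseSp n₁ n₂ => ((θR k i j σ σ' y : ℝ) : ℂ))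
      (Complex.ofRealCLM.comp (Lθ k i j σ σ')) x :=
    Complex.ofRealCLM.hasFDerivAt.comp x hθ
  have hIθ : HasFDerivAt (fun y : PhaseSp n₁ n₂ => Complex.I * ((θR k i j σ σ' y : ℝ) : ℂ))
      (Complex.I • (Complex.ofRealCLM.comp (Lθ k i j σ σ'))) x := hθC.const_mul _
  have hexp : HasFDerivAt (fun y : PhaseSp n₁ n₂ =>
      Complex.exp (Complex.I * ((θR k i j σ σ' y : ℝ) : ℂ)))
      (Complex.exp (Complex.I * ((θR k i j σ σ' x : ℝ) : ℂ)) •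
        (Complex.I • (Complex.ofRealCLM.comp (Lθ k i j σ σ')))) x := hIθ.cexp
  have hu := hsqrtC.mul hexp
  refine ⟨_, hu, ?_⟩
  intro v hv
  have h0i : (Jc i : PhaseSp n₁ n₂ →L[ℝ] ℝ) v = 0 := by simp [hv]
  have h0j : (Jc j : PhaseSp n₁ n₂ →L[ℝ] ℝ) v = 0 := by simp [hv]
  unfold u
  simp only [ContinuousLinearMap.add_apply, ContinuousLinearMap.smul_apply,
    ContinuousLinearMap.comp_apply, h0i, h0j, Complex.ofRealCLM_apply,
    smul_eq_mul, mul_zero, zero_mul, add_zero, zero_add]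
  push_cast
  ring

noncomputable def DH (ω : Fin n₁ → ℝ) (Ω : Fin n₂ → ℝ) : PhaseSp n₁ n₂ →L[ℝ] ℂ :=
  (∑ a, (ω a : ℂ) • (Complex.ofRealCLM.comp (Pc a)))
    + ∑ a, (Ω a : ℂ) • (Complex.ofRealCLM.comp (Jc a))

lemma DH_apply (ω : Fin n₁ → ℝ) (Ω : Fin n₂ → ℝ) (v : PhaseSp n₁ n₂) :
    DH ω Ω v = (∑ a, (ω a : ℂ) * (v.1 a : ℂ)) + ∑ a, (Ω a : ℂ) * (v.2.2.1 a : ℂ) := by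
  simp [DH, ContinuousLinearMap.sum_apply]

lemma hasFDerivAt_H (ω : Fin n₁ → ℝ) (Ω : Fin n₂ → ℝ) (x : PhaseSp n₁ n₂) :
    HasFDerivAt (fun y : PhaseSp n₁ n₂ =>
      (∑ i, (ω i : ℂ) * (y.1 i : ℂ)) + ∑ i, (Ω i : ℂ) * (y.2.2.1 i : ℂ)) (DH ω Ω) x := by
  have h1 : ∀ a : Fin n₁, HasFDerivAt (fun y : PhaseSp n₁ n₂ => (ω a : ℂ) * (y.1 a : ℂ))
      ((ω a : ℂ) • (Complex.ofRealCLM.comp (Pc a))) x :=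
    fun a => ((Complex.ofRealCLM.comp (Pc a)).hasFDerivAt (x := x)).const_mul _
  have h2 : ∀ a : Fin n₂, HasFDerivAt (fun y : PhaseSp n₁ n₂ => (Ω a : ℂ) * (y.2.2.1 a : ℂ))
      ((Ω a : ℂ) • (Complex.ofRealCLM.comp (Jc a))) x :=
    fun a => ((Complex.ofRealCLM.comp (Jc a)).hasFDerivAt (x := x)).const_mul _
  exact (HasFDerivAt.fun_sum (fun a _ => h1 a)).add (HasFDerivAt.fun_sum (fun a _ => h2 a))

lemma DH_qdir (ω : Fin n₁ → ℝ) (Ω : Fin n₂ → ℝ) (b : Fin n₁) :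
    DH (n₂ := n₂) ω Ω ((0 : Fin n₁ → ℝ), Pi.single b 1, 0, 0) = 0 := by
  simp [DH_apply]

lemma DH_pdir (ω : Fin n₁ → ℝ) (Ω : Fin n₂ → ℝ) (b : Fin n₁) :
    DH (n₂ := n₂) ω Ω (Pi.single b 1, 0, 0, 0) = (ω b : ℂ) := by
  simp [DH_apply, Pi.single_apply, apply_ite (fun t : ℝ => (t : ℂ)), mul_ite, Finset.sum_ite_eq']

lemma DH_jdir (ω : Fin n₁ → ℝ) (Ω : Fin n₂ → ℝ) (b : Fin n₂) :
    DH (n₁ := n₁) ω Ω (0, 0, Pi.single b 1, 0) = (Ω b : ℂ) := by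
  simp [DH_apply, Pi.single_apply, apply_ite (fun t : ℝ => (t : ℂ)), mul_ite, Finset.sum_ite_eq']

lemma DH_fdir (ω : Fin n₁ → ℝ) (Ω : Fin n₂ → ℝ) (b : Fin n₂) :
    DH (n₁ := n₁) ω Ω (0, 0, 0, Pi.single b 1) = 0 := by
  simp [DH_apply]

lemma Lθ_qdir (k : Fin n₁ → ℤ) (i j : Fin n₂) (σ σ' : Bool) (b : Fin n₁) :
    Lθ (n₂ := n₂) k i j σ σ' ((0 : Fin n₁ → ℝ), Pi.single b 1, 0, 0) = (k b : ℝ) := by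
  simp [Lθ_apply, Pi.single_apply, mul_ite, Finset.sum_ite_eq']

lemma sum_Lθ_fdir (k : Fin n₁ → ℤ) (i j : Fin n₂) (σ σ' : Bool) (Ω : Fin n₂ → ℝ) :
    ∑ b, Ω b * Lθ (n₁ := n₁) k i j σ σ' (0, 0, 0, Pi.single b 1)
      = sg σ * Ω i + sg σ' * Ω j := by
  simp only [Lθ_apply, Pi.single_apply]
  rw [Finset.sum_congr rfl (fun b _ => by
    show Ω b * ((∑ a, (k a : ℝ) * (0 : Fin n₁ → ℝ) a)
      + sg σ * (if i = b then (1:ℝ) else 0) + sg σ' * (if j = b then (1:ℝ) else 0))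
      = (if i = b then sg σ * Ω b else 0) + (if j = b then sg σ' * Ω b else 0)
    simp only [Pi.zero_apply, mul_zero, Finset.sum_const_zero, zero_add]
    by_cases h1 : i = b <;> by_cases h2 : j = b <;> simp [h1, h2] <;> ring)]
  rw [Finset.sum_add_distrib]
  simp [Finset.sum_ite_eq']


@[simp] lemma sg_not (σ : Bool) : sg (!σ) = - sg σ := by cases σ <;> simp [sg]

lemma θR_neg (k : Fin n₁ → ℤ) (i j : Fin n₂) (σ σ' : Bool) (x : PhaseSp n₁ n₂) :
    θR (-k) i j (!σ) (!σ') x = - θR k i j σ σ' x := by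
  simp only [θR, sg_not, Pi.neg_apply]
  push_cast
  rw [neg_add, neg_add, ← Finset.sum_neg_distrib]
  exact congrArg₂ _ (congrArg₂ _ (Finset.sum_congr rfl fun a _ => by ring) (by ring)) (by ring)

lemma conj_u (k : Fin n₁ → ℤ) (i j : Fin n₂) (σ σ' : Bool) (x : PhaseSp n₁ n₂) :
    (starRingEnd ℂ) (u k i j σ σ' x) = u (-k) i j (!σ) (!σ') x := by
  unfold u
  rw [map_mul, Complex.conj_ofReal, ← Complex.exp_conj]
  congr 2
  rw [map_mul, Complex.conj_I, Complex.conj_ofReal, θR_neg]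
  push_cast
  ring

lemma sum_bool_not {M : Type*} [AddCommMonoid M] (g : Bool → M) :
    ∑ b, g (!b) = ∑ b, g b := by
  rw [Fintype.sum_bool, Fintype.sum_bool]
  simp only [Bool.not_true, Bool.not_false]
  exact add_comm _ _

lemma sum4 {M : Type*} [AddCommMonoid M] (g : Fin n₂ → Fin n₂ → Bool → Bool → M) :
    ∑ i, ∑ j, ∑ σ : Bool, ∑ σ' : Bool, g i j σ σ'
      = ∑ p : Fin n₂ × Fin n₂ × Bool × Bool, g p.1 p.2.1 p.2.2.1 p.2.2.2 := by
  rw [Fintype.sum_prod_type]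
  exact Finset.sum_congr rfl fun i _ => by
    rw [Fintype.sum_prod_type]
    exact Finset.sum_congr rfl fun j _ => by rw [Fintype.sum_prod_type]

end SMHE

/-- Solution of the homological equation under the second
Melnikov condition.  If `k·ω + σΩᵢ + σ'Ωⱼ ≠ 0` for all `0 < |k| ≤ N`,
`σ, σ' ∈ {±1}` and all `i, j`, and
`f = Σ_{|k|≤N} Σ_{i,j} Σ_{σ,σ'} c^{(σ,σ')}_{k,i,j} √(JᵢJⱼ) e^{i(k·q+σφᵢ+σ'φⱼ)}`
with `c^{(σ,σ')}_{k,i,j} = conj (c^{(−σ,−σ')}_{−k,i,j})`, then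
`Y = Σ_{0<|k|≤N} c^{(σ,σ')}_{k,i,j} √(JᵢJⱼ) e^{i(k·q+σφᵢ+σ'φⱼ)} / (i(k·ω+σΩᵢ+σ'Ωⱼ))`
is real-valued and, where all `Jⱼ > 0`, solves `{ω·p + Ω·J, Y} + f − ⟨f⟩_q = 0`. -/
theorem second_melnikov_homological_equation (n₁ n₂ N : ℕ)
    (hn₁ : 1 ≤ n₁) (hn₂ : 1 ≤ n₂) (hN : 1 ≤ N)
    (ω : Fin n₁ → ℝ) (Ω : Fin n₂ → ℝ)
    (hres : ∀ k : Fin n₁ → ℤ, k ≠ 0 → (∑ i, |k i|) ≤ (N : ℤ) →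
      ∀ (i j : Fin n₂) (σ σ' : Bool),
        (∑ a, (k a : ℝ) * ω a) + sg σ * Ω i + sg σ' * Ω j ≠ 0)
    (c : (Fin n₁ → ℤ) → Fin n₂ → Fin n₂ → Bool → Bool → ℂ)
    (hsupp : ∀ k i j σ σ', c k i j σ σ' ≠ 0 → (∑ a, |k a|) ≤ (N : ℤ))
    (hreal : ∀ k i j σ σ',
      c k i j σ σ' = starRingEnd ℂ (c (-k) i j (!σ) (!σ')))
    (f favg Y : PhaseSp n₁ n₂ → ℂ)
    (hf : ∀ x : PhaseSp n₁ n₂,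
      f x = ∑ᶠ k : Fin n₁ → ℤ, ∑ i, ∑ j, ∑ σ : Bool, ∑ σ' : Bool,
        c k i j σ σ' * ((Real.sqrt (x.2.2.1 i * x.2.2.1 j) : ℝ) : ℂ) *
          Complex.exp (Complex.I * ((∑ a, (k a : ℂ) * (x.2.1 a))
            + ((sg σ : ℝ) : ℂ) * (x.2.2.2 i : ℂ) + ((sg σ' : ℝ) : ℂ) * (x.2.2.2 j : ℂ))))
    (hfavg : ∀ x : PhaseSp n₁ n₂,
      favg x = ∑ i, ∑ j, ∑ σ : Bool, ∑ σ' : Bool,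
        c 0 i j σ σ' * ((Real.sqrt (x.2.2.1 i * x.2.2.1 j) : ℝ) : ℂ) *
          Complex.exp (Complex.I *
            (((sg σ : ℝ) : ℂ) * (x.2.2.2 i : ℂ) + ((sg σ' : ℝ) : ℂ) * (x.2.2.2 j : ℂ))))
    (hY : ∀ x : PhaseSp n₁ n₂,
      Y x = ∑ᶠ k : Fin n₁ → ℤ,
        if k ≠ 0 then
          ∑ i, ∑ j, ∑ σ : Bool, ∑ σ' : Bool,
            c k i j σ σ' * ((Real.sqrt (x.2.2.1 i * x.2.2.1 j) : ℝ) : ℂ) *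
              Complex.exp (Complex.I * ((∑ a, (k a : ℂ) * (x.2.1 a))
                + ((sg σ : ℝ) : ℂ) * (x.2.2.2 i : ℂ) + ((sg σ' : ℝ) : ℂ) * (x.2.2.2 j : ℂ)))
              / (Complex.I *
                  ((((∑ a, (k a : ℝ) * ω a) + sg σ * Ω i + sg σ' * Ω j : ℝ)) : ℂ))
        else 0) :
    (∀ x : PhaseSp n₁ n₂, (Y x).im = 0) ∧
    (∀ x : PhaseSp n₁ n₂, (∀ i, 0 < x.2.2.1 i) →
      poissonBracketEll n₁ n₂
        (fun y => (∑ i, (ω i : ℂ) * (y.1 i : ℂ)) + ∑ i, (Ω i : ℂ) * (y.2.2.1 i : ℂ))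
        Y x + f x - favg x = 0) := by
  classical
  set T : Finset (Fin n₁ → ℤ) := Finset.Icc (fun _ => -(N : ℤ)) (fun _ => (N : ℤ)) with hTdef
  have hmemT : ∀ k : Fin n₁ → ℤ, k ∈ T ↔ ∀ a, -(N : ℤ) ≤ k a ∧ k a ≤ N := by
    intro k
    simp [hTdef, Finset.mem_Icc, Pi.le_def, forall_and]
  have habs : ∀ k : Fin n₁ → ℤ, (∑ a, |k a|) ≤ (N : ℤ) → k ∈ T := by
    intro k hk
    rw [hmemT]
    intro a
    have hb : |k a| ≤ (N : ℤ) :=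
      le_trans (Finset.single_le_sum (f := fun a => |k a|) (fun _ _ => abs_nonneg _)
        (Finset.mem_univ a)) hk
    exact abs_le.mp hb
  have hcT : ∀ k, k ∉ T → ∀ (i j : Fin n₂) (σ σ' : Bool), c k i j σ σ' = 0 := by
    intro k hk i j σ σ'
    by_contra h
    exact hk (habs k (hsupp k i j σ σ' h))
  have hTneg : ∀ k : Fin n₁ → ℤ, k ∈ T ↔ -k ∈ T := by
    intro k
    rw [hmemT, hmemT]
    constructor <;> intro h a <;> have := h a <;> simp only [Pi.neg_apply] at * <;> omega
  set lam : (Fin n₁ → ℤ) → Fin n₂ → Fin n₂ → Bool → Bool → ℝ :=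
    fun k i j σ σ' => SMHE.θR k i j σ σ' (0, ω, 0, Ω) with hlamdef
  have hlam_eq : ∀ (k : Fin n₁ → ℤ) (i j : Fin n₂) (σ σ' : Bool),
      lam k i j σ σ' = (∑ a, (k a : ℝ) * ω a) + sg σ * Ω i + sg σ' * Ω j :=
    fun _ _ _ _ _ => rfl
  have hlamneg : ∀ (k : Fin n₁ → ℤ) (i j : Fin n₂) (σ σ' : Bool),
      lam (-k) i j (!σ) (!σ') = - lam k i j σ σ' :=
    fun k i j σ σ' => SMHE.θR_neg k i j σ σ' _
  have hczero : ∀ (k : Fin n₁ → ℤ), k ≠ 0 → ∀ (i j : Fin n₂) (σ σ' : Bool),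
      lam k i j σ σ' = 0 → c k i j σ σ' = 0 := by
    intro k hk i j σ σ' h0
    by_contra hc
    exact hres k hk (hsupp k i j σ σ' hc) i j σ σ' ((hlam_eq k i j σ σ') ▸ h0)
  -- finite-sum representations
  have hfT : ∀ x : PhaseSp n₁ n₂, f x =
      ∑ k ∈ T, ∑ p : Fin n₂ × Fin n₂ × Bool × Bool,
        c k p.1 p.2.1 p.2.2.1 p.2.2.2 * SMHE.u k p.1 p.2.1 p.2.2.1 p.2.2.2 x := by
    intro x
    rw [hf x]
    refine (finsum_eq_sum_of_support_subset _ (s := T) ?_).trans ?_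
    · intro k hk
      simp only [Function.mem_support, ne_eq] at hk
      by_contra hkT
      exact hk (by simp [hcT k hkT])
    · refine Finset.sum_congr rfl fun k _ => ?_
      rw [SMHE.sum4 (g := fun i j σ σ' =>
        c k i j σ σ' * ((Real.sqrt (x.2.2.1 i * x.2.2.1 j) : ℝ) : ℂ) *
          Complex.exp (Complex.I * ((∑ a, (k a : ℂ) * (x.2.1 a))
            + ((sg σ : ℝ) : ℂ) * (x.2.2.2 i : ℂ) + ((sg σ' : ℝ) : ℂ) * (x.2.2.2 j : ℂ))))]
      refine Finset.sum_congr rfl fun p _ => ?_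
      rw [SMHE.u_eq, ← mul_assoc]
  have hYT : ∀ x : PhaseSp n₁ n₂, Y x =
      ∑ k ∈ T, if k ≠ 0 then
        (∑ p : Fin n₂ × Fin n₂ × Bool × Bool,
          c k p.1 p.2.1 p.2.2.1 p.2.2.2 * SMHE.u k p.1 p.2.1 p.2.2.1 p.2.2.2 x /
            (Complex.I * ((lam k p.1 p.2.1 p.2.2.1 p.2.2.2 : ℝ) : ℂ))) else 0 := by
    intro x
    rw [hY x]
    refine (finsum_eq_sum_of_support_subset _ (s := T) ?_).trans ?_
    · intro k hk
      simp only [Function.mem_support, ne_eq] at hk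
      by_contra hkT
      exact hk (by simp [hcT k hkT])
    · refine Finset.sum_congr rfl fun k _ => ?_
      by_cases hk : k = 0
      · simp [hk]
      · rw [if_pos hk, if_pos hk, SMHE.sum4 (g := fun i j σ σ' =>
          c k i j σ σ' * ((Real.sqrt (x.2.2.1 i * x.2.2.1 j) : ℝ) : ℂ) *
            Complex.exp (Complex.I * ((∑ a, (k a : ℂ) * (x.2.1 a))
              + ((sg σ : ℝ) : ℂ) * (x.2.2.2 i : ℂ) + ((sg σ' : ℝ) : ℂ) * (x.2.2.2 j : ℂ)))
            / (Complex.I *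
                ((((∑ a, (k a : ℝ) * ω a) + sg σ * Ω i + sg σ' * Ω j : ℝ)) : ℂ)))]
        refine Finset.sum_congr rfl fun p _ => ?_
        rw [SMHE.u_eq, ← mul_assoc, hlam_eq]
  have hterm_conj : ∀ (k : Fin n₁ → ℤ) (i j : Fin n₂) (σ σ' : Bool) (x : PhaseSp n₁ n₂),
      (starRingEnd ℂ) (c k i j σ σ' * SMHE.u k i j σ σ' x /
          (Complex.I * ((lam k i j σ σ' : ℝ) : ℂ)))
        = c (-k) i j (!σ) (!σ') * SMHE.u (-k) i j (!σ) (!σ') x /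
            (Complex.I * ((lam (-k) i j (!σ) (!σ') : ℝ) : ℂ)) := by
    intro k i j σ σ' x
    have hc : (starRingEnd ℂ) (c k i j σ σ') = c (-k) i j (!σ) (!σ') := by
      rw [hreal (-k) i j (!σ) (!σ')]
      simp
    rw [map_div₀, map_mul, map_mul, Complex.conj_I, Complex.conj_ofReal,
      SMHE.conj_u, hc, hlamneg]
    congr 1
    push_cast
    ring
  constructor
  · -- realness
    intro x
    rw [← Complex.conj_eq_iff_im, hYT x, map_sum]
    refine Finset.sum_equiv (Equiv.neg (Fin n₁ → ℤ)) (fun k => ?_) (fun k hk => ?_)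
    · simpa [Equiv.neg_apply] using hTneg k
    · simp only [Equiv.neg_apply]
      by_cases hk0 : k = 0
      · simp [hk0]
      · have hk0' : -k ≠ 0 := fun h => hk0 (by simpa using congrArg Neg.neg h)
        rw [if_pos hk0, if_pos hk0', map_sum]
        exact Fintype.sum_equiv
          ((Equiv.refl (Fin n₂)).prodCongr (((Equiv.refl (Fin n₂)).prodCongr
            ((⟨Bool.not, Bool.not, Bool.not_not, Bool.not_not⟩ : Bool ≃ Bool).prodCongr
             (⟨Bool.not, Bool.not, Bool.not_not, Bool.not_not⟩ : Bool ≃ Bool))))) _ _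
          (fun p => hterm_conj k p.1 p.2.1 p.2.2.1 p.2.2.2 x)
  · -- the homological equation
    intro x hx
    have hxu : ∀ i j : Fin n₂, (0:ℝ) < x.2.2.1 i * x.2.2.1 j :=
      fun i j => mul_pos (hx i) (hx j)
    choose D hD hDv using fun (k : Fin n₁ → ℤ) (p : Fin n₂ × Fin n₂ × Bool × Bool) =>
      SMHE.hasFDerivAt_u k p.1 p.2.1 p.2.2.1 p.2.2.2 x (hxu p.1 p.2.1)
    set s : (Fin n₁ → ℤ) → Fin n₂ × Fin n₂ × Bool × Bool → ℂ :=
      fun k p => if k ≠ 0 then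
        c k p.1 p.2.1 p.2.2.1 p.2.2.2 / (Complex.I * ((lam k p.1 p.2.1 p.2.2.1 p.2.2.2 : ℝ) : ℂ))
      else 0 with hsdef
    set DYk : (Fin n₁ → ℤ) → PhaseSp n₁ n₂ →L[ℝ] ℂ :=
      fun k => ∑ p : Fin n₂ × Fin n₂ × Bool × Bool, s k p • D k p with hDYkdef
    have hYd : HasFDerivAt Y (∑ k ∈ T, DYk k) x := by
      have hYfun : Y = fun y => ∑ k ∈ T, if k ≠ 0 then
          (∑ p : Fin n₂ × Fin n₂ × Bool × Bool,
            c k p.1 p.2.1 p.2.2.1 p.2.2.2 * SMHE.u k p.1 p.2.1 p.2.2.1 p.2.2.2 y /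
              (Complex.I * ((lam k p.1 p.2.1 p.2.2.1 p.2.2.2 : ℝ) : ℂ))) else 0 :=
        funext hYT
      rw [hYfun]
      refine HasFDerivAt.fun_sum fun k _ => ?_
      by_cases hk : k = 0
      · have h1 : (fun y : PhaseSp n₁ n₂ => if k ≠ 0 then
            (∑ p : Fin n₂ × Fin n₂ × Bool × Bool,
              c k p.1 p.2.1 p.2.2.1 p.2.2.2 * SMHE.u k p.1 p.2.1 p.2.2.1 p.2.2.2 y /
                (Complex.I * ((lam k p.1 p.2.1 p.2.2.1 p.2.2.2 : ℝ) : ℂ))) else 0)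
            = fun _ => (0 : ℂ) := by
          funext y
          rw [if_neg (by simpa using hk)]
        have h2 : DYk k = 0 := by
          rw [hDYkdef]
          refine Finset.sum_eq_zero fun p _ => ?_
          have hs0 : s k p = 0 := by simp [hsdef, hk]
          rw [hs0]
          exact zero_smul ℂ (D k p)
        rw [h1, h2]
        exact hasFDerivAt_const 0 x
      · have h1 : (fun y : PhaseSp n₁ n₂ => if k ≠ 0 then
            (∑ p : Fin n₂ × Fin n₂ × Bool × Bool,
              c k p.1 p.2.1 p.2.2.1 p.2.2.2 * SMHE.u k p.1 p.2.1 p.2.2.1 p.2.2.2 y /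
                (Complex.I * ((lam k p.1 p.2.1 p.2.2.1 p.2.2.2 : ℝ) : ℂ))) else 0)
            = fun y => ∑ p : Fin n₂ × Fin n₂ × Bool × Bool,
              c k p.1 p.2.1 p.2.2.1 p.2.2.2 * SMHE.u k p.1 p.2.1 p.2.2.1 p.2.2.2 y /
                (Complex.I * ((lam k p.1 p.2.1 p.2.2.1 p.2.2.2 : ℝ) : ℂ)) := by
          funext y
          rw [if_pos hk]
        rw [h1, hDYkdef]
        refine HasFDerivAt.fun_sum fun p _ => ?_
        have h := (hD k p).const_mul
          (c k p.1 p.2.1 p.2.2.1 p.2.2.2 / (Complex.I * ((lam k p.1 p.2.1 p.2.2.1 p.2.2.2 : ℝ) : ℂ)))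
        have hs : s k p = c k p.1 p.2.1 p.2.2.1 p.2.2.2 /
            (Complex.I * ((lam k p.1 p.2.1 p.2.2.1 p.2.2.2 : ℝ) : ℂ)) := by
          rw [hsdef]
          simp [hk]
        rw [hs]
        refine h.congr_of_eventuallyEq (Filter.Eventually.of_forall fun y => ?_)
        exact mul_div_right_comm _ _ _
    -- rewrite the bracket
    unfold poissonBracketEll
    rw [hYd.fderiv, (SMHE.hasFDerivAt_H ω Ω x).fderiv]
    simp only [SMHE.DH_qdir, SMHE.DH_pdir, SMHE.DH_jdir, SMHE.DH_fdir,
      zero_mul, zero_sub, mul_zero, sub_zero]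
    simp only [ContinuousLinearMap.sum_apply]
    rw [hfT x]
    have hfavg0 : favg x = ∑ p : Fin n₂ × Fin n₂ × Bool × Bool,
        c 0 p.1 p.2.1 p.2.2.1 p.2.2.2 * SMHE.u 0 p.1 p.2.1 p.2.2.1 p.2.2.2 x := by
      rw [hfavg x, SMHE.sum4 (g := fun i j σ σ' =>
        c 0 i j σ σ' * ((Real.sqrt (x.2.2.1 i * x.2.2.1 j) : ℝ) : ℂ) *
          Complex.exp (Complex.I *
            (((sg σ : ℝ) : ℂ) * (x.2.2.2 i : ℂ) + ((sg σ' : ℝ) : ℂ) * (x.2.2.2 j : ℂ))))]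
      refine Finset.sum_congr rfl fun p _ => ?_
      rw [SMHE.u_eq, ← mul_assoc]
      norm_num
    rw [hfavg0]
    have h0T : (0 : Fin n₁ → ℤ) ∈ T := by
      rw [hmemT]
      intro a
      simp only [Pi.zero_apply]
      omega
    have hsub : (∑ k ∈ T, ∑ p : Fin n₂ × Fin n₂ × Bool × Bool,
          c k p.1 p.2.1 p.2.2.1 p.2.2.2 * SMHE.u k p.1 p.2.1 p.2.2.1 p.2.2.2 x)
        - (∑ p : Fin n₂ × Fin n₂ × Bool × Bool,
            c 0 p.1 p.2.1 p.2.2.1 p.2.2.2 * SMHE.u 0 p.1 p.2.1 p.2.2.1 p.2.2.2 x)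
        = ∑ k ∈ T, if k ≠ 0 then (∑ p : Fin n₂ × Fin n₂ × Bool × Bool,
            c k p.1 p.2.1 p.2.2.1 p.2.2.2 * SMHE.u k p.1 p.2.1 p.2.2.1 p.2.2.2 x) else 0 := by
      have h00 : (∑ p : Fin n₂ × Fin n₂ × Bool × Bool,
            c 0 p.1 p.2.1 p.2.2.1 p.2.2.2 * SMHE.u 0 p.1 p.2.1 p.2.2.1 p.2.2.2 x)
          = ∑ k ∈ T, if k = 0 then (∑ p : Fin n₂ × Fin n₂ × Bool × Bool,
              c k p.1 p.2.1 p.2.2.1 p.2.2.2 * SMHE.u k p.1 p.2.1 p.2.2.1 p.2.2.2 x) else 0 := by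
        rw [Finset.sum_ite_eq' T 0 (fun k => ∑ p : Fin n₂ × Fin n₂ × Bool × Bool,
          c k p.1 p.2.1 p.2.2.1 p.2.2.2 * SMHE.u k p.1 p.2.1 p.2.2.1 p.2.2.2 x), if_pos h0T]
      rw [h00, ← Finset.sum_sub_distrib]
      refine Finset.sum_congr rfl fun k _ => ?_
      by_cases hk : k = 0 <;> simp [hk]
    rw [add_sub_assoc, hsub]
    -- interchange the direction sums with the k-sum
    have hA0 : ∀ b : Fin n₁,
        -((ω b : ℂ) * ∑ k ∈ T, (DYk k) ((0 : Fin n₁ → ℝ), Pi.single b 1, 0, 0))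
          = ∑ k ∈ T, -((ω b : ℂ) * (DYk k) ((0 : Fin n₁ → ℝ), Pi.single b 1, 0, 0)) :=
      fun b => by rw [Finset.mul_sum, ← Finset.sum_neg_distrib]
    have hB0 : ∀ b : Fin n₂,
        -((Ω b : ℂ) * ∑ k ∈ T, (DYk k) (0, 0, 0, Pi.single b 1))
          = ∑ k ∈ T, -((Ω b : ℂ) * (DYk k) (0, 0, 0, Pi.single b 1)) :=
      fun b => by rw [Finset.mul_sum, ← Finset.sum_neg_distrib]
    rw [Finset.sum_congr rfl (fun b _ => hA0 b), Finset.sum_comm,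
      Finset.sum_congr rfl (fun b _ => hB0 b), Finset.sum_comm (s := Finset.univ) (t := T),
      ← Finset.sum_add_distrib, ← Finset.sum_add_distrib]
    refine Finset.sum_eq_zero fun k hkT => ?_
    have hDYkv : ∀ v : PhaseSp n₁ n₂, v.2.2.1 = 0 →
        (DYk k) v = ∑ p : Fin n₂ × Fin n₂ × Bool × Bool,
          s k p * (Complex.I * ((SMHE.Lθ k p.1 p.2.1 p.2.2.1 p.2.2.2 v : ℝ) : ℂ) *
            SMHE.u k p.1 p.2.1 p.2.2.1 p.2.2.2 x) := by
      intro v hv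
      simp only [hDYkdef, ContinuousLinearMap.sum_apply]
      exact Finset.sum_congr rfl fun p _ => by
        rw [ContinuousLinearMap.smul_apply, hDv k p v hv, smul_eq_mul]
    by_cases hk0 : k = 0
    · subst hk0
      have hDY0 : DYk 0 = 0 := by
        simp only [hDYkdef]
        refine Finset.sum_eq_zero fun p _ => ?_
        have hs0 : s 0 p = 0 := by simp [hsdef]
        rw [hs0]
        exact zero_smul ℂ (D 0 p)
      simp [hDY0]
    · rw [if_pos hk0]
      have hA : ∑ b : Fin n₁, -((ω b : ℂ) * (DYk k) ((0 : Fin n₁ → ℝ), Pi.single b 1, 0, 0))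
          = ∑ p : Fin n₂ × Fin n₂ × Bool × Bool,
            -(s k p * Complex.I * SMHE.u k p.1 p.2.1 p.2.2.1 p.2.2.2 x *
              (((∑ a, (k a : ℝ) * ω a : ℝ)) : ℂ)) := by
        have step : ∀ b : Fin n₁,
            -((ω b : ℂ) * (DYk k) ((0 : Fin n₁ → ℝ), Pi.single b 1, 0, 0))
              = ∑ p : Fin n₂ × Fin n₂ × Bool × Bool,
                -((ω b : ℂ) * (s k p * (Complex.I *
                  ((SMHE.Lθ k p.1 p.2.1 p.2.2.1 p.2.2.2
                    ((0 : Fin n₁ → ℝ), Pi.single b 1, 0, 0) : ℝ) : ℂ) *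
                  SMHE.u k p.1 p.2.1 p.2.2.1 p.2.2.2 x))) := by
          intro b
          rw [hDYkv _ rfl, Finset.mul_sum, ← Finset.sum_neg_distrib]
        rw [Finset.sum_congr rfl (fun b _ => step b), Finset.sum_comm]
        refine Finset.sum_congr rfl fun p _ => ?_
        rw [Finset.sum_neg_distrib]
        congr 1
        push_cast
        rw [Finset.mul_sum]
        refine Finset.sum_congr rfl fun b _ => ?_
        rw [SMHE.Lθ_qdir]
        push_cast
        ring
      have hB : ∑ b : Fin n₂, -((Ω b : ℂ) * (DYk k) (0, 0, 0, Pi.single b 1))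
          = ∑ p : Fin n₂ × Fin n₂ × Bool × Bool,
            -(s k p * Complex.I * SMHE.u k p.1 p.2.1 p.2.2.1 p.2.2.2 x *
              (((sg p.2.2.1 * Ω p.1 + sg p.2.2.2 * Ω p.2.1 : ℝ)) : ℂ)) := by
        have step : ∀ b : Fin n₂,
            -((Ω b : ℂ) * (DYk k) (0, 0, 0, Pi.single b 1))
              = ∑ p : Fin n₂ × Fin n₂ × Bool × Bool,
                -((Ω b : ℂ) * (s k p * (Complex.I *
                  ((SMHE.Lθ k p.1 p.2.1 p.2.2.1 p.2.2.2 (0, 0, 0, Pi.single b 1) : ℝ) : ℂ) *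
                  SMHE.u k p.1 p.2.1 p.2.2.1 p.2.2.2 x))) := by
          intro b
          rw [hDYkv _ rfl, Finset.mul_sum, ← Finset.sum_neg_distrib]
        rw [Finset.sum_congr rfl (fun b _ => step b), Finset.sum_comm]
        refine Finset.sum_congr rfl fun p _ => ?_
        rw [Finset.sum_neg_distrib]
        congr 1
        rw [← SMHE.sum_Lθ_fdir k p.1 p.2.1 p.2.2.1 p.2.2.2 Ω]
        push_cast
        rw [Finset.mul_sum]
        refine Finset.sum_congr rfl fun b _ => ?_
        push_cast
        ring
      rw [hA, hB, ← Finset.sum_add_distrib, ← Finset.sum_add_distrib]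
      refine Finset.sum_eq_zero fun p _ => ?_
      have hs : s k p = c k p.1 p.2.1 p.2.2.1 p.2.2.2 /
          (Complex.I * ((lam k p.1 p.2.1 p.2.2.1 p.2.2.2 : ℝ) : ℂ)) := by
        simp [hsdef, hk0]
      by_cases hl : lam k p.1 p.2.1 p.2.2.1 p.2.2.2 = 0
      · have hc0 := hczero k hk0 p.1 p.2.1 p.2.2.1 p.2.2.2 hl
        have hs0 : s k p = 0 := by rw [hs, hc0]; simp
        rw [hs0, hc0]
        simp
      · have hsum : (((∑ a, (k a : ℝ) * ω a : ℝ)) : ℂ)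
            + (((sg p.2.2.1 * Ω p.1 + sg p.2.2.2 * Ω p.2.1 : ℝ)) : ℂ)
            = ((lam k p.1 p.2.1 p.2.2.1 p.2.2.2 : ℝ) : ℂ) := by
          rw [hlam_eq]
          push_cast
          ring
        have hlc : ((lam k p.1 p.2.1 p.2.2.1 p.2.2.2 : ℝ) : ℂ) ≠ 0 :=
          Complex.ofReal_ne_zero.mpr hl
        rw [hs]
        have hend : (c k p.1 p.2.1 p.2.2.1 p.2.2.2 /
              (Complex.I * ((lam k p.1 p.2.1 p.2.2.1 p.2.2.2 : ℝ) : ℂ))) * Complex.I *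
              SMHE.u k p.1 p.2.1 p.2.2.1 p.2.2.2 x * (((∑ a, (k a : ℝ) * ω a : ℝ)) : ℂ)
            + (c k p.1 p.2.1 p.2.2.1 p.2.2.2 /
              (Complex.I * ((lam k p.1 p.2.1 p.2.2.1 p.2.2.2 : ℝ) : ℂ))) * Complex.I *
              SMHE.u k p.1 p.2.1 p.2.2.1 p.2.2.2 x *
              (((sg p.2.2.1 * Ω p.1 + sg p.2.2.2 * Ω p.2.1 : ℝ)) : ℂ)
            = c k p.1 p.2.1 p.2.2.1 p.2.2.2 * SMHE.u k p.1 p.2.1 p.2.2.1 p.2.2.2 x := by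
          have h2 : (c k p.1 p.2.1 p.2.2.1 p.2.2.2 /
              (Complex.I * ((lam k p.1 p.2.1 p.2.2.1 p.2.2.2 : ℝ) : ℂ))) * Complex.I *
              SMHE.u k p.1 p.2.1 p.2.2.1 p.2.2.2 x * (((∑ a, (k a : ℝ) * ω a : ℝ)) : ℂ)
            + (c k p.1 p.2.1 p.2.2.1 p.2.2.2 /
              (Complex.I * ((lam k p.1 p.2.1 p.2.2.1 p.2.2.2 : ℝ) : ℂ))) * Complex.I *
              SMHE.u k p.1 p.2.1 p.2.2.1 p.2.2.2 x *
              (((sg p.2.2.1 * Ω p.1 + sg p.2.2.2 * Ω p.2.1 : ℝ)) : ℂ)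
            = (c k p.1 p.2.1 p.2.2.1 p.2.2.2 /
              (Complex.I * ((lam k p.1 p.2.1 p.2.2.1 p.2.2.2 : ℝ) : ℂ))) * Complex.I *
              SMHE.u k p.1 p.2.1 p.2.2.1 p.2.2.2 x *
              ((((∑ a, (k a : ℝ) * ω a : ℝ)) : ℂ)
                + (((sg p.2.2.1 * Ω p.1 + sg p.2.2.2 * Ω p.2.1 : ℝ)) : ℂ)) := by ring
          rw [h2, hsum]
          field_simp
        linear_combination -hend
end
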